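/- Define the 1-order (s,t)-Eulerian numbers by the recurrence ⟨n,k⟩_(s,t) = (k+s)·⟨n-1,k⟩_(s,t) + (n-k+t)·⟨n-1,k-1⟩_(s,t) + δ_{k,0}δ_{n,0}, with ⟨n,k⟩_(s,t) = 0 if n < 0 or k < 0. Then for all n ≥ 0 and 0 ≤ k ≤ n and nonnegative integers s,t: ⟨n,k⟩_(s,t) = Σ over permutations σ of {1,…,n+1} with exactly k descents of t^(lrmin(σ)-1) · s^(rlmin(σ)-1) (i.e. ⟨n,k⟩_(s,t) = A(k, n-k | t, s) = E_{n,k}(t,s,1)). -/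

import Mathlib

open Finset

def pval {n : ℕ} (σ : Equiv.Perm (Fin n)) (i : ℕ) : ℕ :=
  if h : i < n then (σ ⟨i, h⟩ : ℕ) else 0

def desSet {n : ℕ} (σ : Equiv.Perm (Fin n)) : Finset ℕ :=
  (Finset.range (n - 1)).filter (fun i => pval σ (i + 1) < pval σ i)

def des {n : ℕ} (σ : Equiv.Perm (Fin n)) : ℕ := (desSet σ).card

def maj {n : ℕ} (σ : Equiv.Perm (Fin n)) : ℕ := ∑ i ∈ desSet σ, (i + 1)

def lrmin {n : ℕ} (σ : Equiv.Perm (Fin n)) : ℕ :=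
  ((Finset.range n).filter (fun i => ∀ j ∈ Finset.range i, pval σ i < pval σ j)).card

def rlmin {n : ℕ} (σ : Equiv.Perm (Fin n)) : ℕ :=
  ((Finset.range n).filter
    (fun i => ∀ j ∈ Finset.range n, i < j → pval σ i < pval σ j)).card

def stE (s t : ℕ) : ℕ → ℕ → ℕ
  | 0, k => if k = 0 then 1 else 0
  | n + 1, 0 => s * stE s t n 0
  | n + 1, k + 1 => (k + 1 + s) * stE s t n (k + 1) + (n - k + t) * stE s t n k

def ins {n : ℕ} (τ : Equiv.Perm (Fin (n+1))) (p : Fin (n+2)) : Equiv.Perm (Fin (n+2)) :=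
  (finSuccEquiv' p).trans (τ.optionCongr.trans (finSuccEquiv' (Fin.last (n+1))).symm)

lemma ins_self {n : ℕ} (τ : Equiv.Perm (Fin (n+1))) (p : Fin (n+2)) :
    ins τ p p = Fin.last (n+1) := by
  simp [ins, finSuccEquiv'_at, finSuccEquiv'_symm_none]

lemma ins_succAbove {n : ℕ} (τ : Equiv.Perm (Fin (n+1))) (p : Fin (n+2)) (j : Fin (n+1)) :
    ins τ p (p.succAbove j) = (τ j).castSucc := by
  simp [ins, finSuccEquiv'_succAbove, finSuccEquiv'_symm_some, Fin.succAbove_last]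

lemma pval_le {n : ℕ} (τ : Equiv.Perm (Fin (n+1))) (j : ℕ) : pval τ j ≤ n := by
  unfold pval
  split
  · exact Nat.lt_succ_iff.mp (Fin.is_lt _)
  · exact Nat.zero_le _

lemma pval_ins {n : ℕ} (τ : Equiv.Perm (Fin (n+1))) (p : Fin (n+2)) (i : ℕ) :
    pval (ins τ p) i =
      if i = (p : ℕ) then n + 1 else pval τ (if i < (p : ℕ) then i else i - 1) := by
  by_cases h : i < n + 2
  · by_cases hp : i = (p : ℕ)
    · rw [if_pos hp]
      have hip : (⟨i, h⟩ : Fin (n+2)) = p := Fin.ext hp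
      unfold pval
      rw [dif_pos h, hip, ins_self]
      simp [Fin.last]
    · rw [if_neg hp]
      rcases Nat.lt_or_ge i p with hlt | hge
      · have hi1 : i < n + 1 := lt_of_lt_of_le hlt (Nat.lt_succ_iff.mp p.is_lt)
        have hs : p.succAbove ⟨i, hi1⟩ = ⟨i, h⟩ := by
          rw [Fin.succAbove_of_castSucc_lt]
          · rfl
          · exact hlt
        unfold pval
        rw [dif_pos h, ← hs, ins_succAbove]
        simp only [if_pos hlt]
        rw [dif_pos hi1, Fin.coe_castSucc]
      · have hgt : (p : ℕ) < i := lt_of_le_of_ne hge (fun e => hp e.symm)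
        have hi1 : i - 1 < n + 1 := by omega
        have hs : p.succAbove ⟨i - 1, hi1⟩ = ⟨i, h⟩ := by
          rw [Fin.succAbove_of_le_castSucc]
          · exact Fin.ext (by simp [Fin.succ]; omega)
          · simp [Fin.le_def]; omega
        unfold pval
        rw [dif_pos h, ← hs, ins_succAbove]
        simp only [if_neg (Nat.not_lt.mpr hge)]
        rw [dif_pos hi1, Fin.coe_castSucc]
  · have hp : i ≠ (p : ℕ) := by have := p.is_lt; omega
    rw [if_neg hp, if_neg (by have := p.is_lt; omega)]
    unfold pval
    rw [dif_neg (by omega), dif_neg (by omega)]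

lemma ins_injective {n : ℕ} :
    Function.Injective (fun x : Equiv.Perm (Fin (n+1)) × Fin (n+2) => ins x.1 x.2) := by
  rintro ⟨τ, p⟩ ⟨τ', p'⟩ h
  simp only at h
  have hp : p = p' := by
    have h1 : ins τ p p = Fin.last (n+1) := ins_self τ p
    have h2 : ins τ' p' p' = Fin.last (n+1) := ins_self τ' p'
    rw [h] at h1
    exact (ins τ' p').injective (h1.trans h2.symm)
  subst hp
  have hτ : τ = τ' := by
    ext j
    have := congrArg (fun f : Equiv.Perm (Fin (n+2)) => f (p.succAbove j)) h
    simp only [ins_succAbove] at this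
    exact congrArg Fin.val (Fin.castSucc_injective _ this)
  simp [hτ]

lemma ins_bijective {n : ℕ} :
    Function.Bijective (fun x : Equiv.Perm (Fin (n+1)) × Fin (n+2) => ins x.1 x.2) := by
  rw [Fintype.bijective_iff_injective_and_card]
  refine ⟨ins_injective, ?_⟩
  simp only [Fintype.card_prod, Fintype.card_perm, Fintype.card_fin, Nat.factorial_succ]
  ring

def lset {n : ℕ} (σ : Equiv.Perm (Fin n)) : Finset ℕ :=
  (Finset.range n).filter (fun i => ∀ j ∈ Finset.range i, pval σ i < pval σ j)

def rset {n : ℕ} (σ : Equiv.Perm (Fin n)) : Finset ℕ :=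
  (Finset.range n).filter (fun i => ∀ j ∈ Finset.range n, i < j → pval σ i < pval σ j)

lemma lrmin_eq {n : ℕ} (σ : Equiv.Perm (Fin n)) : lrmin σ = (lset σ).card := rfl
lemma rlmin_eq {n : ℕ} (σ : Equiv.Perm (Fin n)) : rlmin σ = (rset σ).card := rfl

def phi (p j : ℕ) : ℕ := if j < p then j else j + 1

lemma phi_injective (p : ℕ) : Function.Injective (phi p) := by
  intro a b h
  unfold phi at h
  split_ifs at h <;> omega


lemma desSet_ins {n : ℕ} (τ : Equiv.Perm (Fin (n+1))) (p : Fin (n+2)) :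
    desSet (ins τ p) =
      ((desSet τ).filter (fun j => j + 1 ≠ (p : ℕ))).image (phi p) ∪
        ({(p : ℕ)} : Finset ℕ).filter (fun _ => (p : ℕ) < n + 1) := by

  have hf := pval_le τ
  have hpn := p.is_lt
  ext i
  simp only [desSet, Nat.add_sub_cancel, mem_union, mem_image, mem_filter, mem_range,
    mem_singleton, phi, pval_ins]
  constructor
  · rintro ⟨hi, hcond⟩
    by_cases h2 : i = (p : ℕ)
    · right; exact ⟨h2, by omega⟩
    · by_cases h1 : i + 1 = (p : ℕ)
      · rw [if_pos h1, if_neg h2] at hcond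
        exact absurd hcond (by have := hf (if i < (p:ℕ) then i else i - 1); omega)
      · rw [if_neg h1, if_neg h2] at hcond
        left
        rcases Nat.lt_or_ge i (p : ℕ) with hlt | hge
        · rw [if_pos (by omega : i + 1 < (p:ℕ)), if_pos hlt] at hcond
          exact ⟨i, ⟨⟨by omega, hcond⟩, h1⟩, if_pos hlt⟩
        · have hgt : (p : ℕ) < i := by omega
          rw [if_neg (by omega), if_neg (by omega)] at hcond
          refine ⟨i - 1, ⟨⟨by omega, ?_⟩, by omega⟩, by rw [if_neg (by omega)]; omega⟩
          rwa [Nat.sub_add_cancel (by omega : 1 ≤ i)]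
  · rintro (⟨j, ⟨⟨hj, hdes⟩, hne⟩, rfl⟩ | ⟨rfl, hp⟩)
    · by_cases hlt : j < (p : ℕ)
      · rw [if_pos hlt]
        refine ⟨by omega, ?_⟩
        rw [if_neg (by omega : ¬ j + 1 = (p:ℕ)), if_neg (by omega : ¬ j = (p:ℕ)),
          if_pos (by omega : j + 1 < (p:ℕ)), if_pos hlt]
        exact hdes
      · rw [if_neg hlt]
        refine ⟨by omega, ?_⟩
        rw [if_neg (by omega : ¬ j + 1 + 1 = (p:ℕ)), if_neg (by omega : ¬ j + 1 = (p:ℕ)),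
          if_neg (by omega : ¬ j + 1 + 1 < (p:ℕ)), if_neg (by omega : ¬ j + 1 < (p:ℕ))]
        simpa using hdes
    · refine ⟨by omega, ?_⟩
      rw [if_neg (by omega : ¬ (p:ℕ) + 1 = (p:ℕ)), if_pos rfl,
        if_neg (by omega : ¬ (p:ℕ) + 1 < (p:ℕ))]
      have := hf (p : ℕ)
      omega

lemma lset_ins {n : ℕ} (τ : Equiv.Perm (Fin (n+1))) (p : Fin (n+2)) :
    lset (ins τ p) = (lset τ).image (phi p) ∪ ({0} : Finset ℕ).filter (fun _ => (p : ℕ) = 0) := by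

  have hf := pval_le τ
  have hpn := p.is_lt
  ext i
  simp only [lset, mem_union, mem_image, mem_filter, mem_range, mem_singleton, phi, pval_ins]
  constructor
  · rintro ⟨hi, hcond⟩
    by_cases h2 : i = (p : ℕ)
    · by_cases p0 : (p : ℕ) = 0
      · right; exact ⟨by omega, p0⟩
      · have h0 := hcond 0 (by omega)
        rw [if_pos h2, if_neg (by omega : ¬ (0:ℕ) = (p:ℕ)), if_pos (by omega : (0:ℕ) < (p:ℕ))] at h0
        exact absurd h0 (by have := hf 0; omega)
    · left
      rcases Nat.lt_or_ge i (p : ℕ) with hlt | hge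
      · refine ⟨i, ⟨by omega, fun j hj => ?_⟩, if_pos hlt⟩
        have := hcond j hj
        rwa [if_neg (by omega : ¬ j = (p:ℕ)), if_pos (by omega : j < (p:ℕ)),
          if_neg h2, if_pos hlt] at this
      · have hgt : (p : ℕ) < i := by omega
        refine ⟨i - 1, ⟨by omega, fun j' hj' => ?_⟩, by rw [if_neg (by omega)]; omega⟩
        rcases Nat.lt_or_ge j' (p : ℕ) with hj'lt | hj'ge
        · have := hcond j' (by omega)
          rwa [if_neg (by omega : ¬ j' = (p:ℕ)), if_pos hj'lt, if_neg h2,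
            if_neg (by omega : ¬ i < (p:ℕ))] at this
        · have := hcond (j' + 1) (by omega)
          rw [if_neg (by omega : ¬ j' + 1 = (p:ℕ)), if_neg (by omega : ¬ j' + 1 < (p:ℕ)),
            if_neg h2, if_neg (by omega : ¬ i < (p:ℕ))] at this
          simpa using this
  · rintro (⟨j, ⟨hj, hcond⟩, rfl⟩ | ⟨rfl, hp0⟩)
    · by_cases hlt : j < (p : ℕ)
      · rw [if_pos hlt]
        refine ⟨by omega, fun j' hj' => ?_⟩
        rw [if_neg (by omega : ¬ j = (p:ℕ)), if_pos hlt, if_neg (by omega : ¬ j' = (p:ℕ)),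
          if_pos (by omega : j' < (p:ℕ))]
        exact hcond j' hj'
      · rw [if_neg hlt]
        refine ⟨by omega, fun j' hj' => ?_⟩
        rw [if_neg (by omega : ¬ j + 1 = (p:ℕ)), if_neg (by omega : ¬ j + 1 < (p:ℕ))]
        simp only [Nat.add_sub_cancel]
        by_cases jp : j' = (p : ℕ)
        · rw [if_pos jp]
          have := hf j
          omega
        · rcases Nat.lt_or_ge j' (p : ℕ) with hj'lt | hj'ge
          · rw [if_neg jp, if_pos hj'lt]
            exact hcond j' (by omega)
          · rw [if_neg jp, if_neg (by omega : ¬ j' < (p:ℕ))]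
            exact hcond (j' - 1) (by omega)
    · exact ⟨by omega, fun j hj => absurd hj (Nat.not_lt_zero j)⟩



lemma rset_ins {n : ℕ} (τ : Equiv.Perm (Fin (n+1))) (p : Fin (n+2)) :
    rset (ins τ p) = (rset τ).image (phi p) ∪ ({n+1} : Finset ℕ).filter (fun _ => (p : ℕ) = n + 1) := by

  have hf := pval_le τ
  have hpn := p.is_lt
  ext i
  simp only [rset, mem_union, mem_image, mem_filter, mem_range, mem_singleton, phi, pval_ins]
  constructor
  · rintro ⟨hi, hcond⟩
    by_cases h2 : i = (p : ℕ)
    · by_cases pl : (p : ℕ) = n + 1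
      · right; exact ⟨by omega, pl⟩
      · have h0 := hcond (n + 1) (by omega) (by omega)
        rw [if_pos h2, if_neg (by omega : ¬ n + 1 = (p:ℕ)),
          if_neg (by omega : ¬ n + 1 < (p:ℕ))] at h0
        exact absurd h0 (by have := hf (n + 1 - 1); omega)
    · left
      rcases Nat.lt_or_ge i (p : ℕ) with hlt | hge
      · refine ⟨i, ⟨by omega, fun j' hj' hij' => ?_⟩, if_pos hlt⟩
        rcases Nat.lt_or_ge j' (p : ℕ) with hj'lt | hj'ge
        · have := hcond j' (by omega) hij'
          rwa [if_neg (by omega : ¬ j' = (p:ℕ)), if_pos hj'lt, if_neg h2, if_pos hlt] at this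
        · have := hcond (j' + 1) (by omega) (by omega)
          rw [if_neg (by omega : ¬ j' + 1 = (p:ℕ)), if_neg (by omega : ¬ j' + 1 < (p:ℕ)),
            if_neg h2, if_pos hlt] at this
          simpa using this
      · have hgt : (p : ℕ) < i := by omega
        refine ⟨i - 1, ⟨by omega, fun j' hj' hij' => ?_⟩, by rw [if_neg (by omega)]; omega⟩
        have := hcond (j' + 1) (by omega) (by omega)
        rw [if_neg (by omega : ¬ j' + 1 = (p:ℕ)), if_neg (by omega : ¬ j' + 1 < (p:ℕ)),
          if_neg h2, if_neg (by omega : ¬ i < (p:ℕ))] at this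
        simpa using this
  · rintro (⟨j, ⟨hj, hcond⟩, rfl⟩ | ⟨rfl, hpl⟩)
    · by_cases hlt : j < (p : ℕ)
      · rw [if_pos hlt]
        refine ⟨by omega, fun j' hj' hjj' => ?_⟩
        rw [if_neg (by omega : ¬ j = (p:ℕ)), if_pos hlt]
        by_cases jp : j' = (p : ℕ)
        · rw [if_pos jp]
          have := hf j
          omega
        · rcases Nat.lt_or_ge j' (p : ℕ) with hj'lt | hj'ge
          · rw [if_neg jp, if_pos hj'lt]
            exact hcond j' (by omega) hjj'
          · rw [if_neg jp, if_neg (by omega : ¬ j' < (p:ℕ))]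
            exact hcond (j' - 1) (by omega) (by omega)
      · rw [if_neg hlt]
        refine ⟨by omega, fun j' hj' hjj' => ?_⟩
        rw [if_neg (by omega : ¬ j + 1 = (p:ℕ)), if_neg (by omega : ¬ j + 1 < (p:ℕ))]
        simp only [Nat.add_sub_cancel]
        have hj'p : ¬ j' = (p : ℕ) := by omega
        rw [if_neg hj'p, if_neg (by omega : ¬ j' < (p:ℕ))]
        exact hcond (j' - 1) (by omega) (by omega)
    · refine ⟨by omega, fun j' hj' hjj' => absurd hj' (by omega)⟩

def wt (s t : ℕ) {m : ℕ} (σ : Equiv.Perm (Fin m)) : ℕ := t ^ (lrmin σ - 1) * s ^ (rlmin σ - 1)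

lemma phi_ne (p j : ℕ) : phi p j ≠ p := by unfold phi; split_ifs <;> omega

lemma desSet_subset {n : ℕ} (τ : Equiv.Perm (Fin n)) : desSet τ ⊆ Finset.range (n-1) :=
  Finset.filter_subset _ _

lemma des_ins {n : ℕ} (τ : Equiv.Perm (Fin (n+1))) (p : Fin (n+2)) :
    des (ins τ p) =
      ((desSet τ).filter (fun j => j + 1 ≠ (p : ℕ))).card + (if (p : ℕ) < n + 1 then 1 else 0) := by
  rw [des, desSet_ins, Finset.card_union_of_disjoint, Finset.card_image_of_injective _ (phi_injective _),
    Finset.filter_const]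
  · congr 1
    split_ifs <;> simp
  · rw [Finset.disjoint_left]
    intro a ha hb
    simp only [mem_image] at ha
    simp only [Finset.filter_const] at hb
    obtain ⟨j, _, hj⟩ := ha
    have : a = (p : ℕ) := by
      by_cases h : (p : ℕ) < n + 1
      · simpa [h] using hb
      · simp [h] at hb
    exact phi_ne (p : ℕ) j (hj.trans this)

lemma lrmin_ins {n : ℕ} (τ : Equiv.Perm (Fin (n+1))) (p : Fin (n+2)) :
    lrmin (ins τ p) = lrmin τ + (if (p : ℕ) = 0 then 1 else 0) := by
  rw [lrmin_eq, lrmin_eq, lset_ins, Finset.card_union_of_disjoint,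
    Finset.card_image_of_injective _ (phi_injective _), Finset.filter_const]
  · congr 1
    split_ifs <;> simp
  · rw [Finset.disjoint_left]
    intro a ha hb
    simp only [mem_image] at ha
    simp only [Finset.filter_const] at hb
    obtain ⟨j, _, hj⟩ := ha
    by_cases h : (p : ℕ) = 0
    · have ha0 : a = 0 := by simpa [h] using hb
      rw [ha0] at hj; rw [h] at hj
      unfold phi at hj
      split_ifs at hj <;> omega
    · simp [h] at hb

lemma rset_mem_lt {n : ℕ} (τ : Equiv.Perm (Fin n)) {j : ℕ} (h : j ∈ rset τ) : j < n := by
  simp only [rset, mem_filter, mem_range] at h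
  exact h.1

lemma rlmin_ins {n : ℕ} (τ : Equiv.Perm (Fin (n+1))) (p : Fin (n+2)) :
    rlmin (ins τ p) = rlmin τ + (if (p : ℕ) = n + 1 then 1 else 0) := by
  rw [rlmin_eq, rlmin_eq, rset_ins, Finset.card_union_of_disjoint,
    Finset.card_image_of_injective _ (phi_injective _), Finset.filter_const]
  · congr 1
    split_ifs <;> simp
  · rw [Finset.disjoint_left]
    intro a ha hb
    simp only [mem_image] at ha
    simp only [Finset.filter_const] at hb
    obtain ⟨j, hjm, hj⟩ := ha
    by_cases h : (p : ℕ) = n + 1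
    · have ha0 : a = n + 1 := by simpa [h] using hb
      have hjlt := rset_mem_lt τ hjm
      rw [ha0] at hj; rw [h] at hj
      unfold phi at hj
      split_ifs at hj <;> omega
    · simp [h] at hb

lemma one_le_lrmin {n : ℕ} (τ : Equiv.Perm (Fin (n+1))) : 1 ≤ lrmin τ := by
  rw [lrmin_eq]
  refine Finset.card_pos.mpr ⟨0, ?_⟩
  simp [lset]

lemma one_le_rlmin {n : ℕ} (τ : Equiv.Perm (Fin (n+1))) : 1 ≤ rlmin τ := by
  rw [rlmin_eq]
  refine Finset.card_pos.mpr ⟨n, ?_⟩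
  simp only [rset, mem_filter, mem_range]
  exact ⟨by omega, fun j hj hnj => absurd hj (by omega)⟩

lemma wt_ins {n : ℕ} (s t : ℕ) (τ : Equiv.Perm (Fin (n+1))) (p : Fin (n+2)) :
    wt s t (ins τ p) =
      (if (p : ℕ) = 0 then t else 1) * (if (p : ℕ) = n + 1 then s else 1) * wt s t τ := by
  have hL := one_le_lrmin τ
  have hR := one_le_rlmin τ
  obtain ⟨a, ha⟩ : ∃ a, lrmin τ = a + 1 := ⟨lrmin τ - 1, by omega⟩
  obtain ⟨b, hb⟩ : ∃ b, rlmin τ = b + 1 := ⟨rlmin τ - 1, by omega⟩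
  unfold wt
  rw [lrmin_ins, rlmin_ins, ha, hb]
  split_ifs <;> simp only [Nat.add_zero, Nat.add_sub_cancel, pow_succ] <;> ring

lemma des_ins_zero {n : ℕ} (τ : Equiv.Perm (Fin (n+1))) :
    des (ins τ (0 : Fin (n+2))) = des τ + 1 := by
  rw [des_ins]
  simp only [Fin.val_zero]
  simp [des]

lemma des_ins_last {n : ℕ} (τ : Equiv.Perm (Fin (n+1))) :
    des (ins τ ((Fin.last n).succ)) = des τ := by
  rw [des_ins]
  have hval : (((Fin.last n).succ : Fin (n+2)) : ℕ) = n + 1 := by simp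
  rw [hval]
  rw [Finset.filter_true_of_mem, if_neg (by omega)]
  · rfl
  · intro j hj
    have := desSet_subset τ hj
    simp only [mem_range] at this
    omega

lemma des_ins_mid {n : ℕ} (τ : Equiv.Perm (Fin (n+1))) (q : Fin n) :
    des (ins τ ((q.castSucc).succ)) =
      if (q : ℕ) ∈ desSet τ then des τ else des τ + 1 := by
  rw [des_ins]
  have hval : (((q.castSucc).succ : Fin (n+2)) : ℕ) = (q : ℕ) + 1 := by simp
  rw [hval, if_pos (by have := q.is_lt; omega)]
  have hflt : (desSet τ).filter (fun j => j + 1 ≠ (q : ℕ) + 1) = (desSet τ).erase (q : ℕ) := by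
    rw [← Finset.filter_ne']
    exact Finset.filter_congr (fun x _ => by constructor <;> intro h <;> omega)
  rw [hflt]
  by_cases hq : (q : ℕ) ∈ desSet τ
  · rw [if_pos hq, Finset.card_erase_of_mem hq]
    have : 1 ≤ (desSet τ).card := Finset.card_pos.mpr ⟨_, hq⟩
    unfold des
    omega
  · rw [if_neg hq, Finset.erase_eq_of_notMem hq]
    rfl

lemma hstep {n : ℕ} (s t k : ℕ) :
    (∑ σ ∈ (Finset.univ : Finset (Equiv.Perm (Fin (n + 2)))).filter (fun σ => des σ = k), wt s t σ)
      = ∑ τ : Equiv.Perm (Fin (n + 1)),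
          ((if des τ = k then (des τ + s) * wt s t τ else 0)
            + (if des τ + 1 = k then (n - des τ + t) * wt s t τ else 0)) := by
  rw [Finset.sum_filter,
    ← Function.Bijective.sum_comp ins_bijective (fun σ => if des σ = k then wt s t σ else 0),
    Fintype.sum_prod_type]
  refine Finset.sum_congr rfl (fun τ _ => ?_)
  rw [Fin.sum_univ_succ, Fin.sum_univ_castSucc]
  have h0 : (if des (ins τ (0 : Fin (n+2))) = k then wt s t (ins τ 0) else 0)
      = if des τ + 1 = k then t * wt s t τ else 0 := by
    rw [des_ins_zero, wt_ins]
    simp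
  have hlast : (if des (ins τ ((Fin.last n).succ)) = k then wt s t (ins τ ((Fin.last n).succ)) else 0)
      = if des τ = k then s * wt s t τ else 0 := by
    have hval : (((Fin.last n).succ : Fin (n+2)) : ℕ) = n + 1 := by simp
    rw [des_ins_last, wt_ins, hval]
    simp
  have hmid : ∀ q : Fin n,
      (if des (ins τ ((q.castSucc).succ)) = k then wt s t (ins τ ((q.castSucc).succ)) else 0)
        = if (q : ℕ) ∈ desSet τ then (if des τ = k then wt s t τ else 0)
            else (if des τ + 1 = k then wt s t τ else 0) := by
    intro q
    have hval : (((q.castSucc).succ : Fin (n+2)) : ℕ) = (q : ℕ) + 1 := by simp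
    have e1 : (((q.castSucc).succ : Fin (n+2)) : ℕ) ≠ 0 := by rw [hval]; omega
    have e2 : (((q.castSucc).succ : Fin (n+2)) : ℕ) ≠ n + 1 := by
      rw [hval]; have := q.is_lt; omega
    rw [des_ins_mid, wt_ins, if_neg e1, if_neg e2, one_mul, one_mul]
    by_cases hq : (q : ℕ) ∈ desSet τ
    · rw [if_pos hq, if_pos hq]
    · rw [if_neg hq, if_neg hq]
  rw [h0, hlast, Finset.sum_congr rfl (fun q _ => hmid q),
    Fin.sum_univ_eq_sum_range (fun q => if q ∈ desSet τ then (if des τ = k then wt s t τ else 0)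
      else (if des τ + 1 = k then wt s t τ else 0)) n,
    Finset.sum_ite, Finset.sum_const, Finset.sum_const, smul_eq_mul, smul_eq_mul]
  have hsub : desSet τ ⊆ Finset.range n := by simpa using desSet_subset τ
  have c1 : (Finset.range n).filter (fun q => q ∈ desSet τ) = desSet τ := by
    rw [Finset.filter_mem_eq_inter]
    exact Finset.inter_eq_right.mpr hsub
  have c2 : ((Finset.range n).filter (fun q => q ∉ desSet τ)).card = n - des τ := by
    have := Finset.card_filter_add_card_filter_not
      (s := Finset.range n) (p := fun q => q ∈ desSet τ)
    rw [c1] at this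
    simp only [Finset.card_range] at this
    unfold des
    omega
  rw [c1, c2]
  unfold des
  split_ifs with h1 h2 <;> first | ring | (exfalso; omega)

lemma main_lemma (s t n : ℕ) : ∀ k, stE s t n k =
    ∑ σ ∈ (Finset.univ : Finset (Equiv.Perm (Fin (n + 1)))).filter (fun σ => des σ = k),
      wt s t σ := by
  induction n with
  | zero =>
    intro k
    have huniv : (Finset.univ : Finset (Equiv.Perm (Fin 1))) = {1} :=
      Finset.eq_singleton_iff_unique_mem.mpr
        ⟨mem_univ 1, fun σ _ => Equiv.ext (fun x => Subsingleton.elim _ _)⟩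
    rw [Finset.sum_filter, huniv, Finset.sum_singleton]
    have hd : des (1 : Equiv.Perm (Fin 1)) = 0 := by decide
    have hl : lrmin (1 : Equiv.Perm (Fin 1)) = 1 := by decide
    have hr : rlmin (1 : Equiv.Perm (Fin 1)) = 1 := by decide
    unfold wt
    rw [hd, hl, hr]
    show (if k = 0 then 1 else 0) = _
    by_cases hk : k = 0 <;> simp [hk, eq_comm]
  | succ n ih =>
    intro k
    match k with
    | 0 =>
      rw [hstep s t 0]
      have step2 : ∀ τ : Equiv.Perm (Fin (n+1)),
          ((if des τ = 0 then (des τ + s) * wt s t τ else 0)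
            + (if des τ + 1 = 0 then (n - des τ + t) * wt s t τ else 0))
          = s * (if des τ = 0 then wt s t τ else 0) := by
        intro τ
        by_cases h : des τ = 0 <;> simp [h]
      rw [Finset.sum_congr rfl (fun τ _ => step2 τ), ← Finset.mul_sum, ← Finset.sum_filter]
      show s * stE s t n 0 = _
      rw [ih 0]
    | k + 1 =>
      rw [hstep s t (k+1)]
      rw [Finset.sum_add_distrib]
      have step2 : ∀ τ : Equiv.Perm (Fin (n+1)),
          (if des τ = k + 1 then (des τ + s) * wt s t τ else 0)
            = (k + 1 + s) * (if des τ = k + 1 then wt s t τ else 0) := by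
        intro τ
        by_cases h : des τ = k + 1 <;> simp [h]
      have step3 : ∀ τ : Equiv.Perm (Fin (n+1)),
          (if des τ + 1 = k + 1 then (n - des τ + t) * wt s t τ else 0)
            = (n - k + t) * (if des τ = k then wt s t τ else 0) := by
        intro τ
        by_cases h : des τ = k
        · rw [if_pos (by omega), if_pos h, h]
        · rw [if_neg (by omega), if_neg h, mul_zero]
      rw [Finset.sum_congr rfl (fun τ _ => step2 τ), Finset.sum_congr rfl (fun τ _ => step3 τ),
        ← Finset.mul_sum, ← Finset.mul_sum, ← Finset.sum_filter, ← Finset.sum_filter]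
      show (k + 1 + s) * stE s t n (k+1) + (n - k + t) * stE s t n k = _
      rw [ih (k+1), ih k]

theorem stE_eq_carlitz_scoville (s t n k : ℕ) (hk : k ≤ n) :
    stE s t n k =
      ∑ σ ∈ (Finset.univ : Finset (Equiv.Perm (Fin (n + 1)))).filter (fun σ => des σ = k),
        t ^ (lrmin σ - 1) * s ^ (rlmin σ - 1) :=
  main_lemma s t n k
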